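/- Let G be an edge-colored connected graph of order n and 1 <= k <= n-1. G has a spanning tree using at least k distinct colors if and only if G has a heterochromatic spanning forest with exactly n - k components. -/

import Mathlib

open SimpleGraph Finset

/-- Number of connected components of a graph. -/
noncomputable def omega {V : Type*} (G : SimpleGraph V) : ℕ :=
  Nat.card G.ConnectedComponent

/-- Number of edges of `G` having color `c`. -/
noncomputable def colorCount {V C : Type*} (G : SimpleGraph V)
    (color : Sym2 V → C) (c : C) : ℕ :=
  Nat.card {e : Sym2 V // e ∈ G.edgeSet ∧ color e = c}

/-- `G` is `f`-chromatic: each color `c` appears on at most `f c` edges. -/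
def IsChromatic {V C : Type*} (G : SimpleGraph V)
    (color : Sym2 V → C) (f : C → ℕ) : Prop :=
  ∀ c, colorCount G color c ≤ f c

/-- `G - E_R(G)` : delete all edges whose color lies in `R`. -/
def delR {V C : Type*} (G : SimpleGraph V) (color : Sym2 V → C)
    (R : Finset C) : SimpleGraph V :=
  G.deleteEdges {e | color e ∈ R}

section Aux

variable {V : Type*}

lemma acyclic_anti {F T : SimpleGraph V} (h : F ≤ T) (hT : T.IsAcyclic) : F.IsAcyclic :=
  fun _ w hw => hT (w.mapLe h) (hw.mapLe h)

/-- Key walk-splitting lemma: a walk in `H` gives, after deleting the edge `s(u,v)`,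
either a direct connection or connections through the endpoints of the deleted edge. -/
lemma walk_del {H : SimpleGraph V} (u v : V) {a b : V} (p : H.Walk a b) :
    (H.deleteEdges {s(u,v)}).Reachable a b ∨
    ((H.deleteEdges {s(u,v)}).Reachable a u ∧ (H.deleteEdges {s(u,v)}).Reachable v b) ∨
    ((H.deleteEdges {s(u,v)}).Reachable a v ∧ (H.deleteEdges {s(u,v)}).Reachable u b) := by
  induction p with
  | nil => exact Or.inl (Reachable.refl _)
  | @cons a c b h p ih =>
    by_cases he : s(a,c) = s(u,v)
    · rw [Sym2.eq_iff] at he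
      rcases he with ⟨ha, hc⟩ | ⟨ha, hc⟩ <;> subst ha <;> subst hc
      · rcases ih with h1 | ⟨h1, h2⟩ | ⟨h1, h2⟩
        · exact Or.inr (Or.inl ⟨Reachable.refl _, h1⟩)
        · exact Or.inl (h1.symm.trans h2)
        · exact Or.inl h2
      · rcases ih with h1 | ⟨h1, h2⟩ | ⟨h1, h2⟩
        · exact Or.inr (Or.inr ⟨Reachable.refl _, h1⟩)
        · exact Or.inl h2
        · exact Or.inl (h1.symm.trans h2)
    · have hadj : (H.deleteEdges {s(u,v)}).Adj a c := by
        rw [deleteEdges_adj]; exact ⟨h, by simpa using he⟩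
      rcases ih with h1 | ⟨h1, h2⟩ | ⟨h1, h2⟩
      · exact Or.inl (hadj.reachable.trans h1)
      · exact Or.inr (Or.inl ⟨hadj.reachable.trans h1, h2⟩)
      · exact Or.inr (Or.inr ⟨hadj.reachable.trans h1, h2⟩)

lemma omega_del_le [Finite V] (H : SimpleGraph V) (u v : V) :
    omega (H.deleteEdges {s(u,v)}) ≤ omega H + 1 := by
  classical
  set H' := H.deleteEdges {s(u,v)} with hH'
  have hle : H' ≤ H := deleteEdges_le _
  let φ : H'.ConnectedComponent → H.ConnectedComponent :=
    ConnectedComponent.map (Hom.ofLE hle)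
  let g : H'.ConnectedComponent → H.ConnectedComponent ⊕ Unit := fun c =>
    if c = H'.connectedComponentMk v then Sum.inr () else Sum.inl (φ c)
  have hg : Function.Injective g := by
    intro c₁ c₂ hc
    by_cases h1 : c₁ = H'.connectedComponentMk v <;>
      by_cases h2 : c₂ = H'.connectedComponentMk v
    · exact h1.trans h2.symm
    · rw [show g c₁ = Sum.inr () from if_pos h1,
        show g c₂ = Sum.inl (φ c₂) from if_neg h2] at hc
      exact absurd hc (by simp)
    · rw [show g c₁ = Sum.inl (φ c₁) from if_neg h1,
        show g c₂ = Sum.inr () from if_pos h2] at hc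
      exact absurd hc (by simp)
    · rw [show g c₁ = Sum.inl (φ c₁) from if_neg h1,
        show g c₂ = Sum.inl (φ c₂) from if_neg h2] at hc
      have hφeq : φ c₁ = φ c₂ := Sum.inl_injective hc
      obtain ⟨x, rfl⟩ := c₁.exists_rep
      obtain ⟨y, rfl⟩ := c₂.exists_rep
      have : H.connectedComponentMk x = H.connectedComponentMk y := hφeq
      have hr : H.Reachable x y := ConnectedComponent.exact this
      obtain ⟨p⟩ := hr
      rcases walk_del u v p with hr' | ⟨hr1, hr2⟩ | ⟨hr1, hr2⟩
      · exact ConnectedComponent.sound hr'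
      · exact absurd (ConnectedComponent.sound hr2.symm) h2
      · exact absurd (ConnectedComponent.sound hr1) h1
  calc omega H' ≤ Nat.card (H.ConnectedComponent ⊕ Unit) :=
        Nat.card_le_card_of_injective g hg
    _ = omega H + 1 := by simp [Nat.card_sum, omega]

lemma omega_lt_del [Finite V] {H : SimpleGraph V} {u v : V} (huv : H.Adj u v)
    (hnr : ¬ (H.deleteEdges {s(u,v)}).Reachable u v) :
    omega H + 1 ≤ omega (H.deleteEdges {s(u,v)}) := by
  classical
  set H' := H.deleteEdges {s(u,v)} with hH'
  have hle : H' ≤ H := deleteEdges_le _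
  let φ : H'.ConnectedComponent → H.ConnectedComponent :=
    ConnectedComponent.map (Hom.ofLE hle)
  have hsurj : Function.Surjective φ := by
    intro c; obtain ⟨x, rfl⟩ := c.exists_rep
    exact ⟨H'.connectedComponentMk x, rfl⟩
  have hninj : ¬ Function.Injective φ := by
    intro hinj
    have h1 : φ (H'.connectedComponentMk u) = φ (H'.connectedComponentMk v) :=
      ConnectedComponent.sound huv.reachable
    have := hinj h1
    exact hnr (ConnectedComponent.exact this)
  have : Fintype H'.ConnectedComponent := Fintype.ofFinite _
  have : Fintype H.ConnectedComponent := Fintype.ofFinite _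
  have hlt : Fintype.card H.ConnectedComponent < Fintype.card H'.ConnectedComponent :=
    Fintype.card_lt_of_surjective_not_injective φ hsurj hninj
  simpa [omega, Nat.card_eq_fintype_card] using hlt

lemma omega_bot [Fintype V] : omega (⊥ : SimpleGraph V) = Fintype.card V := by
  rw [omega, ← Nat.card_eq_fintype_card]
  refine (Nat.card_eq_of_bijective (⊥ : SimpleGraph V).connectedComponentMk
    ⟨fun a b h => ?_, Quot.mk_surjective⟩).symm
  simpa [reachable_bot] using ConnectedComponent.exact h

/-- In an acyclic graph, the endpoints of an edge are not reachable after deleting it. -/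
lemma not_reach_del_of_acyclic {H : SimpleGraph V} (hH : H.IsAcyclic) {u v : V}
    (huv : H.Adj u v) : ¬ (H.deleteEdges {s(u,v)}).Reachable u v := by
  classical
  intro hr
  have hle : H.deleteEdges {s(u,v)} ≤ H := deleteEdges_le _
  obtain ⟨w⟩ := hr.symm
  let p := w.toPath
  have hsub : ∀ e ∈ p.val.edges, e ∈ H.edgeSet :=
    fun e hep => edgeSet_mono hle (p.val.edges_subset_edgeSet hep)
  let q := p.val.transfer H hsub
  have hq : q.IsPath := p.prop.transfer hsub
  have he2 : s(u,v) ∉ q.edges := by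
    rw [Walk.edges_transfer]
    intro hmem
    have := p.val.edges_subset_edgeSet hmem
    rw [edgeSet_deleteEdges] at this
    exact this.2 rfl
  exact hH _ (Path.cons_isCycle ⟨q, hq⟩ huv he2)

lemma omega_add_card_aux [Fintype V] :
    ∀ (m : ℕ) (H : SimpleGraph V), H.IsAcyclic → H.edgeSet.ncard = m →
      omega H + m = Fintype.card V := by
  intro m
  induction m with
  | zero =>
    intro H _ hm
    have hbot : H = ⊥ := by
      rw [← edgeSet_eq_empty, ← Set.ncard_eq_zero (Set.toFinite _)]; exact hm
    simpa [hbot] using omega_bot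
  | succ m ih =>
    intro H hH hm
    obtain ⟨e, he⟩ : H.edgeSet.Nonempty := Set.nonempty_of_ncard_ne_zero (by omega)
    revert he
    refine Sym2.ind (fun u v he => ?_) e
    have huv : H.Adj u v := (H.mem_edgeSet).mp he
    set H' := H.deleteEdges {s(u,v)} with hH'def
    have hle : H' ≤ H := deleteEdges_le _
    have hcard : H'.edgeSet.ncard = m := by
      have h1 : (H.edgeSet \ {s(u,v)}).ncard + 1 = H.edgeSet.ncard :=
        Set.ncard_diff_singleton_add_one he (Set.toFinite _)
      rw [hH'def, edgeSet_deleteEdges]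
      omega
    have hnr : ¬ H'.Reachable u v := not_reach_del_of_acyclic hH huv
    have homega : omega H' = omega H + 1 :=
      le_antisymm (omega_del_le H u v) (omega_lt_del huv hnr)
    have := ih H' (acyclic_anti hle hH) hcard
    omega

/-- Euler-type formula for forests: components + edges = vertices. -/
lemma omega_add_card [Fintype V] (H : SimpleGraph V) (hH : H.IsAcyclic) :
    omega H + H.edgeSet.ncard = Fintype.card V :=
  omega_add_card_aux _ H hH rfl

lemma exists_adj_not_reach {G F : SimpleGraph V} {u v : V} (p : G.Walk u v)
    (h : ¬ F.Reachable u v) : ∃ a b, G.Adj a b ∧ ¬ F.Reachable a b := by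
  revert h
  induction p with
  | nil => intro h; exact absurd (Reachable.refl _) h
  | @cons a c v ha p ih =>
    intro h
    by_cases hr : F.Reachable a c
    · exact ih (fun hcv => h (hr.trans hcv))
    · exact ⟨a, c, ha, hr⟩

lemma acyclic_sup_edge {F : SimpleGraph V} {a b : V} (hF : F.IsAcyclic) (hab : a ≠ b)
    (hnr : ¬ F.Reachable a b) : (F ⊔ fromEdgeSet {s(a,b)}).IsAcyclic := by
  set F' := F ⊔ fromEdgeSet {s(a,b)} with hF'
  have hdel : F'.deleteEdges {s(a,b)} = F := by
    ext x y
    simp only [hF', deleteEdges_adj, sup_adj, fromEdgeSet_adj, Set.mem_singleton_iff]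
    constructor
    · rintro ⟨h1 | ⟨h2, _⟩, hne⟩
      · exact h1
      · exact absurd h2 hne
    · intro h
      refine ⟨Or.inl h, fun heq => ?_⟩
      rw [Sym2.eq_iff] at heq
      rcases heq with ⟨h1, h2⟩ | ⟨h1, h2⟩
      · subst h1; subst h2; exact hnr h.reachable
      · subst h1; subst h2; exact hnr h.symm.reachable
  rw [isAcyclic_iff_forall_adj_isBridge]
  intro x y hxy
  rw [isBridge_iff]
  show ¬ (F'.deleteEdges {s(x,y)}).Reachable x y
  by_cases hexy : s(x,y) = s(a,b)
  · have heq : F'.deleteEdges {s(x,y)} = F := by rw [hexy]; exact hdel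
    rw [heq]
    rw [Sym2.eq_iff] at hexy
    rcases hexy with ⟨h1, h2⟩ | ⟨h1, h2⟩
    · subst h1; subst h2; exact hnr
    · subst h1; subst h2; exact fun hr => hnr hr.symm
  · have hxyF : F.Adj x y := by
      rcases hxy with h1 | h2
      · exact h1
      · rw [fromEdgeSet_adj, Set.mem_singleton_iff] at h2
        exact absurd h2.1 hexy
    have hb : ¬ (F.deleteEdges {s(x,y)}).Reachable x y :=
      isBridge_iff.mp ((isAcyclic_iff_forall_adj_isBridge.mp hF) hxyF)
    intro hr
    obtain ⟨w⟩ := hr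
    have key := walk_del a b w
    have heq2 : (F'.deleteEdges {s(x,y)}).deleteEdges {s(a,b)} = F.deleteEdges {s(x,y)} := by
      rw [deleteEdges_deleteEdges, Set.union_comm, ← deleteEdges_deleteEdges, hdel]
    rw [heq2] at key
    have hle2 : F.deleteEdges {s(x,y)} ≤ F := deleteEdges_le _
    rcases key with h1 | ⟨h1, h2⟩ | ⟨h1, h2⟩
    · exact hb h1
    · exact hnr ((h1.mono hle2).symm.trans (hxyF.reachable.trans (h2.mono hle2).symm))
    · exact hnr ((h2.mono hle2).trans (hxyF.symm.reachable.trans (h1.mono hle2)))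

lemma exists_tree_ext [Fintype V] {G : SimpleGraph V} (hG : G.Connected) :
    ∀ (m : ℕ) (F : SimpleGraph V), omega F ≤ m → F ≤ G → F.IsAcyclic →
      ∃ T, F ≤ T ∧ T ≤ G ∧ T.IsTree := by
  intro m
  induction m with
  | zero =>
    intro F hm _ _
    exfalso
    have hne : Nonempty V := hG.nonempty
    have : Nonempty F.ConnectedComponent := ⟨F.connectedComponentMk (Classical.arbitrary V)⟩
    have : 0 < omega F := Nat.card_pos
    omega
  | succ m ih =>
    intro F hm hFG hFa
    by_cases hc : F.Connected
    · exact ⟨F, le_rfl, hFG, ⟨hc, hFa⟩⟩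
    · have hne : Nonempty V := hG.nonempty
      obtain ⟨u, v, huv⟩ : ∃ u v, ¬ F.Reachable u v := by
        by_contra h
        push_neg at h
        exact hc ((connected_iff _).mpr ⟨fun u v => h u v, hne⟩)
      obtain ⟨w⟩ := hG.preconnected u v
      obtain ⟨a, b, hab, hnr⟩ := exists_adj_not_reach w huv
      set F' := F ⊔ fromEdgeSet {s(a,b)} with hF'
      have hF'G : F' ≤ G := by
        refine sup_le hFG ?_
        intro x y hxy
        rw [fromEdgeSet_adj, Set.mem_singleton_iff] at hxy
        obtain ⟨heq, hne'⟩ := hxy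
        rw [Sym2.eq_iff] at heq
        rcases heq with ⟨h1, h2⟩ | ⟨h1, h2⟩
        · subst h1; subst h2; exact hab
        · subst h1; subst h2; exact hab.symm
      have hF'a : F'.IsAcyclic := acyclic_sup_edge hFa hab.ne hnr
      have homega : omega F' < omega F := by
        classical
        let φ : F.ConnectedComponent → F'.ConnectedComponent :=
          ConnectedComponent.map (Hom.ofLE (le_sup_left : F ≤ F'))
        have hsurj : Function.Surjective φ := by
          intro c; obtain ⟨x, rfl⟩ := c.exists_rep
          exact ⟨F.connectedComponentMk x, rfl⟩
        have hninj : ¬ Function.Injective φ := by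
          intro hinj
          have hadj : F'.Adj a b := Or.inr ((fromEdgeSet_adj _).mpr ⟨rfl, hab.ne⟩)
          have h1 : φ (F.connectedComponentMk a) = φ (F.connectedComponentMk b) :=
            ConnectedComponent.sound hadj.reachable
          exact hnr (ConnectedComponent.exact (hinj h1))
        have : Fintype F.ConnectedComponent := Fintype.ofFinite _
        have : Fintype F'.ConnectedComponent := Fintype.ofFinite _
        have hlt := Fintype.card_lt_of_surjective_not_injective φ hsurj hninj
        simpa [omega, Nat.card_eq_fintype_card] using hlt
      obtain ⟨T, h1, h2, h3⟩ := ih F' (by omega) hF'G hF'a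
      exact ⟨T, le_sup_left.trans h1, h2, h3⟩

/-- Any acyclic subgraph of a connected graph extends to a spanning tree. -/
lemma exists_tree [Fintype V] {G F : SimpleGraph V} (hG : G.Connected) (hFG : F ≤ G)
    (hFa : F.IsAcyclic) : ∃ T, F ≤ T ∧ T ≤ G ∧ T.IsTree :=
  exists_tree_ext hG (omega F) F le_rfl hFG hFa

end Aux

theorem stmt11 {V C : Type*} [Fintype V] (G : SimpleGraph V) (color : Sym2 V → C)
    (n k : ℕ) (hn : Fintype.card V = n) (hG : G.Connected)
    (hk1 : 1 ≤ k) (hk2 : k ≤ n - 1) :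
    (∃ T : SimpleGraph V, T ≤ G ∧ T.IsTree ∧ k ≤ Nat.card (color '' T.edgeSet)) ↔
      ∃ F : SimpleGraph V, F ≤ G ∧ F.IsAcyclic ∧ omega F = n - k ∧
        Set.InjOn color F.edgeSet := by
  classical
  have hneV : Nonempty V := hG.nonempty
  constructor
  · rintro ⟨T, hTG, hT, hk⟩
    have himg : k ≤ (color '' T.edgeSet).ncard := by
      rwa [← Nat.card_coe_set_eq]
    obtain ⟨t, hts, htc⟩ := Set.exists_subset_card_eq himg
    have hneS : Nonempty (Sym2 V) := ⟨s(Classical.arbitrary V, Classical.arbitrary V)⟩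
    set g : C → Sym2 V := fun c =>
      if h : ∃ e, e ∈ T.edgeSet ∧ color e = c then h.choose else Classical.arbitrary _ with hgdef
    have hg : ∀ c ∈ t, g c ∈ T.edgeSet ∧ color (g c) = c := by
      intro c hc
      have h : ∃ e, e ∈ T.edgeSet ∧ color e = c := hts hc
      rw [hgdef]
      simp only [dif_pos h]
      exact ⟨h.choose_spec.1, h.choose_spec.2⟩
    set S : Set (Sym2 V) := g '' t with hSdef
    have hSsub : S ⊆ T.edgeSet := by
      rintro e ⟨c, hc, rfl⟩; exact (hg c hc).1
    have hginj : Set.InjOn g t := by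
      intro c₁ h1 c₂ h2 he
      rw [← (hg c₁ h1).2, ← (hg c₂ h2).2, he]
    have hScard : S.ncard = k := by
      rw [hSdef, Set.ncard_image_of_injOn hginj, htc]
    set F : SimpleGraph V := fromEdgeSet S with hFdef
    have hFT : F ≤ T := by
      calc F ≤ fromEdgeSet T.edgeSet := fromEdgeSet_mono hSsub
        _ = T := fromEdgeSet_edgeSet T
    have hFedge : F.edgeSet = S := by
      rw [hFdef, edgeSet_fromEdgeSet]
      ext e
      refine ⟨fun h => h.1, fun h => ⟨h, fun hd => ?_⟩⟩
      exact (T.not_isDiag_of_mem_edgeSet (hSsub h)) hd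
    have hFa : F.IsAcyclic := acyclic_anti hFT hT.IsAcyclic
    refine ⟨F, hFT.trans hTG, hFa, ?_, ?_⟩
    · have hcount := omega_add_card F hFa
      rw [hFedge, hScard, hn] at hcount
      omega
    · rw [hFedge, hSdef]
      rintro e₁ ⟨c₁, hc₁, rfl⟩ e₂ ⟨c₂, hc₂, rfl⟩ hcol
      rw [(hg c₁ hc₁).2, (hg c₂ hc₂).2] at hcol
      rw [hcol]
  · rintro ⟨F, hFG, hFa, hω, hinj⟩
    obtain ⟨T, hFT, hTG, hT⟩ := exists_tree hG hFG hFa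
    refine ⟨T, hTG, hT, ?_⟩
    have hcnt := omega_add_card F hFa
    rw [hω, hn] at hcnt
    have hkn : k ≤ n := le_trans hk2 (Nat.sub_le n 1)
    have hFk : F.edgeSet.ncard = k := by omega
    calc k = (color '' F.edgeSet).ncard := by
          rw [Set.ncard_image_of_injOn hinj, hFk]
      _ ≤ (color '' T.edgeSet).ncard :=
          Set.ncard_le_ncard (Set.image_mono (edgeSet_mono hFT))
            ((Set.toFinite T.edgeSet).image _)
      _ = Nat.card (color '' T.edgeSet) := (Nat.card_coe_set_eq _).symm
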